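/- Let m, n be positive natural numbers, let q = gcd(m, n), m' = m / q, n' = n / q, and let a ≤ n and b ≤ m be natural numbers. Then the pair (a, b) satisfies: there exists a matrix M ∈ {0,1}^{m×n} (all entries 0 or 1) with every row summing to a and every column summing to b, if and only if (a, b) belongs to the set { (q'·n', q'·m') : q' a natural number with 0 ≤ q' ≤ q }. -/

import Mathlib

open Fin.NatCast

private lemma sum_range_mul' (f : ℕ → ℕ) (p r : ℕ) :
    ∑ x ∈ Finset.range (p * r), f x
      = ∑ s ∈ Finset.range p, ∑ t ∈ Finset.range r, f (s * r + t) := by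
  induction p with
  | zero => simp
  | succ p ih =>
      rw [Nat.succ_mul, Finset.sum_range_add, ih, Finset.sum_range_succ]

private lemma count_lt (k q' : ℕ) (hq' : q' ≤ k + 1) :
    ∑ x : Fin (k + 1), (if (x : Fin (k + 1)).val < q' then (1 : ℕ) else 0) = q' := by
  rw [Fin.sum_univ_eq_sum_range (fun i => if i < q' then (1 : ℕ) else 0)]
  rw [Finset.sum_ite, Finset.sum_const, Finset.sum_const_zero]
  have hfil : (Finset.range (k + 1)).filter (fun i => i < q') = Finset.range q' := by
    ext x; simp; omega
  rw [hfil, Finset.card_range]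
  simp

private lemma count_shift (k q' : ℕ) (hq' : q' ≤ k + 1) (g : Fin (k + 1) → Fin (k + 1))
    (hg : Function.Bijective g) :
    ∑ x : Fin (k + 1), (if (g x).val < q' then (1 : ℕ) else 0) = q' := by
  rw [Fintype.sum_bijective g hg _ (fun x => if x.val < q' then (1 : ℕ) else 0)
    (fun x => rfl)]
  exact count_lt k q' hq'

/-- With `q = gcd(m, n)`, `m' = m / q`, `n' = n / q`: a binary `m × n` matrix with
all row sums `a` and all column sums `b` exists if and only if
`(a, b) ∈ {(q'·n', q'·m') : 0 ≤ q' ≤ q}`. -/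
theorem bms_margins_iff (m n : ℕ) (hm : 0 < m) (hn : 0 < n)
    (a b : ℕ) (ha : a ≤ n) (hb : b ≤ m) :
    (∃ M : Fin m → Fin n → ℕ,
      (∀ i j, M i j = 0 ∨ M i j = 1) ∧
      (∀ i, ∑ j, M i j = a) ∧
      (∀ j, ∑ i, M i j = b)) ↔
    (a, b) ∈ {p : ℕ × ℕ | ∃ q' ≤ Nat.gcd m n,
      p = (q' * (n / Nat.gcd m n), q' * (m / Nat.gcd m n))} := by
  set q := Nat.gcd m n with hqdef
  set m' := m / q with hm'def
  set n' := n / q with hn'def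
  have hq : 0 < q := Nat.gcd_pos_of_pos_left n hm
  have hmq : q * m' = m := Nat.mul_div_cancel' (Nat.gcd_dvd_left m n)
  have hnq : q * n' = n := Nat.mul_div_cancel' (Nat.gcd_dvd_right m n)
  have hm' : 0 < m' := Nat.div_pos (Nat.le_of_dvd hm (Nat.gcd_dvd_left m n)) hq
  have hn' : 0 < n' := Nat.div_pos (Nat.le_of_dvd hn (Nat.gcd_dvd_right m n)) hq
  have cop : Nat.Coprime m' n' := Nat.coprime_div_gcd_div_gcd hq
  constructor
  · rintro ⟨M, h01, hr, hc⟩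
    have h1 : ∑ i : Fin m, ∑ j : Fin n, M i j = m * a := by
      simp [hr, Finset.sum_const, Finset.card_univ, mul_comm]
    have h2 : ∑ i : Fin m, ∑ j : Fin n, M i j = n * b := by
      rw [Finset.sum_comm]
      simp [hc, Finset.sum_const, Finset.card_univ, mul_comm]
    have key : m' * a = n' * b := by
      have : q * (m' * a) = q * (n' * b) := by
        rw [← mul_assoc, ← mul_assoc, hmq, hnq]; omega
      exact Nat.eq_of_mul_eq_mul_left hq this
    have hdvd : n' ∣ a := by
      refine (Nat.Coprime.dvd_of_dvd_mul_left cop.symm ?_ : n' ∣ a)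
      exact ⟨b, key⟩
    obtain ⟨q', hq'⟩ := hdvd
    refine Set.mem_setOf_eq ▸ ⟨q', ?_, ?_⟩
    · have : q' * n' ≤ q * n' := by rw [mul_comm q' n', ← hq']; omega
      exact Nat.le_of_mul_le_mul_right this hn'
    · have hb' : b = q' * m' := by
        have : n' * b = n' * (q' * m') := by
          rw [← key, hq']; ring
        exact Nat.eq_of_mul_eq_mul_left hn' this
      simp [hq', hb', mul_comm]
  · rintro ⟨q', hq'le, hab⟩
    have ha' : a = q' * n' := by
      have := congrArg Prod.fst hab; simpa using this
    have hb' : b = q' * m' := by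
      have := congrArg Prod.snd hab; simpa using this
    obtain ⟨k, hk⟩ : ∃ k, q = k + 1 := ⟨q - 1, by omega⟩
    have hq'le' : q' ≤ k + 1 := by omega
    refine ⟨fun i j => if (((j.val / n' : ℕ) : Fin (k + 1))
        - ((i.val / m' : ℕ) : Fin (k + 1))).val < q' then 1 else 0, ?_, ?_, ?_⟩
    · intro i j; dsimp only; split <;> simp
    · intro i
      set c : Fin (k + 1) := ((i.val / m' : ℕ) : Fin (k + 1)) with hc
      have hrw : ∑ j : Fin n, (if (((j.val / n' : ℕ) : Fin (k + 1)) - c).val < q'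
            then (1 : ℕ) else 0)
          = ∑ t ∈ Finset.range n, (if (((t / n' : ℕ) : Fin (k + 1)) - c).val < q'
            then (1 : ℕ) else 0) :=
        Fin.sum_univ_eq_sum_range
          (fun t => if (((t / n' : ℕ) : Fin (k + 1)) - c).val < q' then (1 : ℕ) else 0) n
      rw [hrw]
      have hnval : n = (k + 1) * n' := by rw [← hnq, hk]
      rw [hnval, sum_range_mul']
      have hinner : ∀ s ∈ Finset.range (k + 1), ∀ t ∈ Finset.range n',
          (if ((((s * n' + t) / n' : ℕ) : Fin (k + 1)) - c).val < q' then (1 : ℕ) else 0)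
            = (if (((s : ℕ) : Fin (k + 1)) - c).val < q' then (1 : ℕ) else 0) := by
        intro s _ t ht
        have : (s * n' + t) / n' = s := by
          rw [mul_comm, Nat.mul_add_div hn', Nat.div_eq_of_lt (Finset.mem_range.mp ht)]
          omega
        rw [this]
      calc ∑ s ∈ Finset.range (k + 1), ∑ t ∈ Finset.range n',
              (if ((((s * n' + t) / n' : ℕ) : Fin (k + 1)) - c).val < q' then (1:ℕ) else 0)
          = ∑ s ∈ Finset.range (k + 1), ∑ _t ∈ Finset.range n',
              (if (((s : ℕ) : Fin (k + 1)) - c).val < q' then (1:ℕ) else 0) := by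
            refine Finset.sum_congr rfl fun s hs => Finset.sum_congr rfl fun t ht => ?_
            exact hinner s hs t ht
        _ = n' * ∑ s ∈ Finset.range (k + 1),
              (if (((s : ℕ) : Fin (k + 1)) - c).val < q' then (1:ℕ) else 0) := by
            rw [Finset.mul_sum]
            refine Finset.sum_congr rfl fun s _ => ?_
            rw [Finset.sum_const, Finset.card_range, smul_eq_mul]
        _ = n' * q' := by
            congr 1
            have hback : ∑ s ∈ Finset.range (k + 1),
                (if (((s : ℕ) : Fin (k + 1)) - c).val < q' then (1:ℕ) else 0)
                = ∑ x : Fin (k + 1), (if (x - c).val < q' then (1:ℕ) else 0) := by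
              rw [← Fin.sum_univ_eq_sum_range
                (fun s => if (((s : ℕ) : Fin (k + 1)) - c).val < q' then (1:ℕ) else 0)]
              refine Finset.sum_congr rfl fun x _ => ?_
              rw [Fin.cast_val_eq_self]
            rw [hback]
            exact count_shift k q' hq'le' (fun x => x - c)
              (Equiv.subRight c).bijective
        _ = a := by rw [ha']; exact mul_comm n' q'
    · intro j
      set c : Fin (k + 1) := ((j.val / n' : ℕ) : Fin (k + 1)) with hc
      have hrw : ∑ i : Fin m, (if (c - ((i.val / m' : ℕ) : Fin (k + 1))).val < q'
            then (1 : ℕ) else 0)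
          = ∑ t ∈ Finset.range m, (if (c - ((t / m' : ℕ) : Fin (k + 1))).val < q'
            then (1 : ℕ) else 0) :=
        Fin.sum_univ_eq_sum_range
          (fun t => if (c - ((t / m' : ℕ) : Fin (k + 1))).val < q' then (1 : ℕ) else 0) m
      rw [hrw]
      have hmval : m = (k + 1) * m' := by rw [← hmq, hk]
      rw [hmval, sum_range_mul']
      calc ∑ s ∈ Finset.range (k + 1), ∑ t ∈ Finset.range m',
              (if (c - (((s * m' + t) / m' : ℕ) : Fin (k + 1))).val < q' then (1:ℕ) else 0)
          = ∑ s ∈ Finset.range (k + 1), ∑ _t ∈ Finset.range m',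
              (if (c - ((s : ℕ) : Fin (k + 1))).val < q' then (1:ℕ) else 0) := by
            refine Finset.sum_congr rfl fun s hs => Finset.sum_congr rfl fun t ht => ?_
            have : (s * m' + t) / m' = s := by
              rw [mul_comm, Nat.mul_add_div hm', Nat.div_eq_of_lt (Finset.mem_range.mp ht)]
              omega
            rw [this]
        _ = m' * ∑ s ∈ Finset.range (k + 1),
              (if (c - ((s : ℕ) : Fin (k + 1))).val < q' then (1:ℕ) else 0) := by
            rw [Finset.mul_sum]
            refine Finset.sum_congr rfl fun s _ => ?_
            rw [Finset.sum_const, Finset.card_range, smul_eq_mul]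
        _ = m' * q' := by
            congr 1
            have hback : ∑ s ∈ Finset.range (k + 1),
                (if (c - ((s : ℕ) : Fin (k + 1))).val < q' then (1:ℕ) else 0)
                = ∑ x : Fin (k + 1), (if (c - x).val < q' then (1:ℕ) else 0) := by
              rw [← Fin.sum_univ_eq_sum_range
                (fun s => if (c - ((s : ℕ) : Fin (k + 1))).val < q' then (1:ℕ) else 0)]
              refine Finset.sum_congr rfl fun x _ => ?_
              rw [Fin.cast_val_eq_self]
            rw [hback]
            exact count_shift k q' hq'le' (fun x => c - x)
              (Equiv.subLeft c).bijective
        _ = b := by rw [hb']; exact mul_comm m' q'
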